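/- Fix an integer d ≥ 3 and let α > 0. For m ∈ ℕ let H_m be the polynomial defined by the recurrence A_{m,m} = 1, A_{m,k-1} = -(2k(2k+d-2)/(m-k+1))·A_{m,k}, and set φ_{2m}(y) = H_m(2α y²). Then for all natural numbers n and m with m ≥ n + 1, one has ∫₀^∞ y^{2n}·φ_{2m}(y)·y^{d-1}·e^{-α y²/2} dy = 0. -/

import Mathlib

open Finset MeasureTheory

-- forward difference of the shifted factorial product
private lemma prod_diff_key (n : ℕ) (y : ℝ) :
    (∏ j ∈ Finset.range (n+1), ((y+1) + j + 1)) - ∏ j ∈ Finset.range (n+1), (y + j + 1)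
      = ((n:ℝ)+1) * ∏ j ∈ Finset.range n, ((y+1) + j + 1) := by
  rw [Finset.prod_range_succ, Finset.prod_range_succ' (fun j => (y + j + 1))]
  have h2 : ∏ k ∈ Finset.range n, (y + ((k+1 : ℕ):ℝ) + 1) = ∏ j ∈ Finset.range n, ((y+1) + j + 1) :=
    Finset.prod_congr rfl (fun j _ => by push_cast; ring)
  rw [h2]
  push_cast
  ring

private lemma alt_sum_aux (n : ℕ) : ∀ m : ℕ, n < m → ∀ x : ℝ,
    ∑ k ∈ Finset.range (m + 1), (-1 : ℝ) ^ k * (m.choose k) *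
      ∏ j ∈ Finset.range n, (x + k + j + 1) = 0 := by
  induction n with
  | zero =>
    intro m hm x
    simp only [Finset.range_zero, Finset.prod_empty, mul_one]
    have h := Int.alternating_sum_range_choose_of_ne (by omega : m ≠ 0)
    have h2 : ((∑ i ∈ Finset.range (m+1), (-1 : ℤ) ^ i * (m.choose i) : ℤ) : ℝ) = 0 := by
      rw [h]; norm_num
    push_cast at h2
    exact h2
  | succ n ih =>
    intro m hm x
    obtain ⟨M, rfl⟩ : ∃ M, m = M + 1 := ⟨m - 1, by omega⟩
    have hM : n < M := by omega
    set P : ℕ → ℝ := fun k => ∏ j ∈ Finset.range (n+1), (x + k + j + 1) with hP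
    have hT1 : ∑ k ∈ Finset.range (M + 2), (-1 : ℝ) ^ k * (M.choose k) * P k
        = ∑ k ∈ Finset.range (M + 1), (-1 : ℝ) ^ k * (M.choose k) * P k := by
      rw [Finset.sum_range_succ, Nat.choose_succ_self]
      simp
    have hS : ∑ k ∈ Finset.range (M + 2), (-1 : ℝ) ^ k * ((M+1).choose k) * P k
        = ∑ k ∈ Finset.range (M + 1), (-1 : ℝ) ^ k * (M.choose k) * P k
          - ∑ k ∈ Finset.range (M + 1), (-1 : ℝ) ^ k * (M.choose k) * P (k+1) := by
      rw [← hT1, Finset.sum_range_succ' (fun k => (-1 : ℝ) ^ k * ((M+1).choose k) * P k) (M+1),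
        Finset.sum_range_succ' (fun k => (-1 : ℝ) ^ k * (M.choose k) * P k) (M+1)]
      have e1 : ∀ k ∈ Finset.range (M+1),
          (-1 : ℝ) ^ (k+1) * ((M+1).choose (k+1)) * P (k+1)
          = (-1 : ℝ) ^ (k+1) * (M.choose (k+1)) * P (k+1)
            - (-1 : ℝ) ^ k * (M.choose k) * P (k+1) := by
        intro k _
        have : (((M+1).choose (k+1) : ℕ) : ℝ) = (M.choose k : ℝ) + (M.choose (k+1) : ℝ) := by
          exact_mod_cast congrArg Nat.cast (Nat.choose_succ_succ M k)
        rw [this]; ring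
      rw [Finset.sum_congr rfl e1, Finset.sum_sub_distrib]
      simp
      ring
    rw [hS, ← Finset.sum_sub_distrib]
    have e2 : ∀ k ∈ Finset.range (M+1),
        (-1 : ℝ) ^ k * (M.choose k) * P k - (-1 : ℝ) ^ k * (M.choose k) * P (k+1)
        = -((n:ℝ)+1) * ((-1 : ℝ) ^ k * (M.choose k) * ∏ j ∈ Finset.range n, ((x+1) + k + j + 1)) := by
      intro k _
      have hd := prod_diff_key n (x + k)
      have hPk1 : P (k+1) = ∏ j ∈ Finset.range (n+1), ((x + k + 1) + j + 1) := by
        rw [hP]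
        refine Finset.prod_congr rfl fun j _ => ?_
        push_cast; ring
      have hP' : ∀ j ∈ Finset.range n, ((x + k + 1) + j + 1) = ((x+1) + k + j + 1) := by
        intro j _; ring
      rw [hPk1]
      rw [Finset.prod_congr rfl hP'] at hd
      have : P k = ∏ j ∈ Finset.range (n+1), ((x + k) + j + 1) := rfl
      rw [this]
      linear_combination (-((-1:ℝ)^k * (M.choose k : ℝ))) * hd
    rw [Finset.sum_congr rfl e2, ← Finset.mul_sum, ih M hM (x+1)]
    ring

private lemma range_to_Ico (c : ℝ) (a b : ℕ) :
    ∏ j ∈ Finset.range b, (c + a + j + 1) = ∏ i ∈ Finset.Ico (a+1) (a+b+1), (c + i) := by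
  rw [Finset.prod_Ico_eq_prod_range]
  have : a + b + 1 - (a + 1) = b := by omega
  rw [this]
  refine Finset.prod_congr rfl fun j _ => ?_
  push_cast; ring

private lemma prod_merge (c : ℝ) {n k m : ℕ} (hn : n ≤ m) (hk : k ≤ m) :
    (∏ j ∈ Finset.range (m-k), (c + k + j + 1)) * ∏ j ∈ Finset.range k, (c + n + j + 1)
    = (∏ j ∈ Finset.range (m-n), (c + n + j + 1)) * ∏ j ∈ Finset.range n, (c + k + j + 1) := by
  have h1 : k + (m - k) + 1 = m + 1 := by omega
  have h2 : n + (m - n) + 1 = m + 1 := by omega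
  rw [range_to_Ico, range_to_Ico, range_to_Ico, range_to_Ico, h1, h2]
  set f : ℕ → ℝ := fun i => c + i
  rcases le_or_gt (k + n) m with h | h
  · rw [← Finset.prod_Ico_consecutive f (by omega : k+1 ≤ k+n+1) (by omega : k+n+1 ≤ m+1),
      ← Finset.prod_Ico_consecutive f (by omega : n+1 ≤ n+k+1) (by omega : n+k+1 ≤ m+1)]
    have : n + k + 1 = k + n + 1 := by omega
    rw [this]
    ring
  · rw [← Finset.prod_Ico_consecutive f (by omega : n+1 ≤ m+1) (by omega : m+1 ≤ n+k+1),
      ← Finset.prod_Ico_consecutive f (by omega : k+1 ≤ m+1) (by omega : m+1 ≤ k+n+1)]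
    have : n + k + 1 = k + n + 1 := by omega
    rw [this]
    ring

private lemma gamma_shift {t : ℝ} (ht : 0 < t) : ∀ k : ℕ,
    Real.Gamma (t + k) = Real.Gamma t * ∏ j ∈ Finset.range k, (t + j) := by
  intro k
  induction k with
  | zero => simp
  | succ k ih =>
    have h : t + ((k:ℝ)+1) = (t + k) + 1 := by ring
    rw [Finset.prod_range_succ, ← mul_assoc, ← ih]
    push_cast
    rw [h, Real.Gamma_add_one (by positivity)]
    ring

private lemma Jval {b : ℝ} (hb : 0 < b) (q : ℕ) :
    ∫ y in Set.Ioi (0:ℝ), y ^ q * Real.exp (-b * y ^ 2)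
      = b ^ (-((q:ℝ)+1)/2) * (1/2) * Real.Gamma (((q:ℝ)+1)/2) := by
  have h := integral_rpow_mul_exp_neg_mul_rpow (p := 2) (q := (q:ℝ)) (b := b)
    (by norm_num) (by exact lt_of_lt_of_le (by norm_num) (Nat.cast_nonneg q)) hb
  rw [← h]
  refine setIntegral_congr_fun measurableSet_Ioi fun y hy => ?_
  have hy' : (0:ℝ) < y := hy
  rw [Real.rpow_natCast, show ((2:ℝ)) = ((2:ℕ):ℝ) by norm_num, Real.rpow_natCast]

private lemma Jint {b : ℝ} (hb : 0 < b) (q : ℕ) :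
    IntegrableOn (fun y : ℝ => y ^ q * Real.exp (-b * y ^ 2)) (Set.Ioi 0) := by
  have h := integrableOn_rpow_mul_exp_neg_mul_sq hb
    (s := (q:ℝ)) (lt_of_lt_of_le (by norm_num) (Nat.cast_nonneg q))
  refine h.congr_fun (fun y hy => ?_) measurableSet_Ioi
  simp only [Real.rpow_natCast]

private lemma A_closed (d : ℕ) (A : ℕ → ℕ → ℝ)
    (hAm : ∀ m : ℕ, A m m = 1)
    (hArec : ∀ m k : ℕ, 1 ≤ k → k ≤ m →
      A m (k - 1) = -(2 * (k : ℝ) * (2 * (k : ℝ) + (d : ℝ) - 2) / ((m : ℝ) - (k : ℝ) + 1)) * A m k)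
    (m : ℕ) : ∀ i, i ≤ m → A m (m - i)
      = (-4:ℝ)^i * (m.choose (m-i)) *
          ∏ j ∈ Finset.range i, ((d:ℝ)/2 - 1 + ((m-i : ℕ):ℝ) + j + 1) := by
  intro i
  induction i with
  | zero => intro _; simp [hAm]
  | succ i ih =>
    intro hi
    have hi' : i ≤ m := by omega
    set k := m - i with hk
    have hk1 : 1 ≤ k := by omega
    have hkm : k ≤ m := by omega
    have hrec := hArec m k hk1 hkm
    have hmi : m - (i+1) = k - 1 := by omega
    rw [hmi, hrec, ih hi']
    have hcast : ((k-1 : ℕ):ℝ) = (k:ℝ) - 1 := by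
      push_cast [Nat.cast_sub hk1]; ring
    have hprod : ∏ j ∈ Finset.range (i+1), (((d:ℝ)/2 - 1) + ((k-1:ℕ):ℝ) + j + 1)
        = (∏ j ∈ Finset.range i, (((d:ℝ)/2 - 1) + (k:ℝ) + j + 1)) * (((d:ℝ)/2 - 1) + (k:ℝ)) := by
      rw [Finset.prod_range_succ' (fun j => ((d:ℝ)/2 - 1) + ((k-1:ℕ):ℝ) + j + 1) i]
      congr 1
      · refine Finset.prod_congr rfl fun j _ => ?_
        rw [hcast]; push_cast; ring
      · rw [hcast]; push_cast; ring
    have hD : ((m - k + 1 : ℕ):ℝ) = (m:ℝ) - (k:ℝ) + 1 := by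
      push_cast [Nat.cast_sub hkm]; ring
    have hDne : (m:ℝ) - (k:ℝ) + 1 ≠ 0 := by
      rw [← hD]; positivity
    have hchN := Nat.choose_succ_right_eq m (k-1)
    rw [Nat.sub_add_cancel hk1, (by omega : m - (k-1) = m - k + 1)] at hchN
    have hcR : (m.choose k : ℝ) * k = (m.choose (k-1) : ℝ) * ((m - k + 1:ℕ):ℝ) := by
      exact_mod_cast congrArg (Nat.cast : ℕ → ℝ) hchN
    have hch2 : (m.choose (k-1) : ℝ) = (k:ℝ) * (m.choose k) / ((m:ℝ) - (k:ℝ) + 1) := by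
      rw [eq_div_iff hDne, ← hD]
      linear_combination -hcR
    rw [hD] at hcR
    rw [hprod, hch2]
    field_simp
    ring

private lemma term_eval (d n m k : ℕ) (hd : 3 ≤ d) (α : ℝ) (hα : 0 < α) (hk : k ≤ m) (hn : n ≤ m)
    (A : ℕ → ℕ → ℝ)
    (hAm : ∀ m : ℕ, A m m = 1)
    (hArec : ∀ m k : ℕ, 1 ≤ k → k ≤ m →
      A m (k - 1) = -(2 * (k : ℝ) * (2 * (k : ℝ) + (d : ℝ) - 2) / ((m : ℝ) - (k : ℝ) + 1)) * A m k) :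
    A m k * (2*α)^k * ((α/2) ^ (-(((2*(n+k)+(d-1) : ℕ) : ℝ)+1)/2) * (1/2) *
        Real.Gamma ((((2*(n+k)+(d-1) : ℕ) : ℝ)+1)/2))
    = ((1/2) * Real.Gamma ((d:ℝ)/2 - 1 + (n:ℝ) + 1) * (α/2) ^ (-((d:ℝ)/2 - 1 + (n:ℝ) + 1)) * 4^m
        * (-1:ℝ)^m * ∏ j ∈ Finset.range (m-n), ((d:ℝ)/2 - 1 + (n:ℝ) + j + 1))
      * ((-1:ℝ)^k * (m.choose k) * ∏ j ∈ Finset.range n, ((d:ℝ)/2 - 1 + (k:ℝ) + j + 1)) := by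
  have hb' : (0:ℝ) < α/2 := by linarith
  have hd1 : 1 ≤ d := by omega
  have hq : (((2*(n+k)+(d-1) : ℕ)):ℝ) = 2*n+2*k+(d:ℝ)-1 := by
    push_cast [Nat.cast_sub hd1]; ring
  have ht : (0:ℝ) < (d:ℝ)/2 - 1 + (n:ℝ) + 1 := by
    have h3 : (3:ℝ) ≤ (d:ℝ) := by exact_mod_cast hd
    have hn0 : (0:ℝ) ≤ n := Nat.cast_nonneg n
    linarith
  have hexp1 : -(((2*(n+k)+(d-1):ℕ) : ℝ)+1)/2 = -((d:ℝ)/2 - 1 + (n:ℝ) + 1) + -((k:ℕ):ℝ) := by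
    rw [hq]; ring
  have hexp2 : (((2*(n+k)+(d-1):ℕ) : ℝ)+1)/2 = ((d:ℝ)/2 - 1 + (n:ℝ) + 1) + ((k:ℕ):ℝ) := by
    rw [hq]; ring
  rw [hexp1, hexp2, Real.rpow_add hb', Real.rpow_neg hb'.le ((k:ℕ):ℝ), Real.rpow_natCast,
    gamma_shift ht k]
  have hA := A_closed d A hAm hArec m (m-k) (by omega)
  rw [show m - (m-k) = k by omega] at hA
  rw [hA]
  have hQ2 : (∏ j ∈ Finset.range k, (((d:ℝ)/2 - 1 + (n:ℝ) + 1) + j))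
      = ∏ j ∈ Finset.range k, ((d:ℝ)/2 - 1 + (n:ℝ) + j + 1) :=
    Finset.prod_congr rfl (fun j _ => by ring)
  rw [hQ2]
  have hmerge := prod_merge ((d:ℝ)/2 - 1) hn hk
  have h4k : (2*α)^k * (((α/2):ℝ)^k)⁻¹ = 4^k := by
    rw [← div_eq_mul_inv, ← div_pow, show (2*α)/(α/2) = 4 by field_simp; ring]
  have h4m : (4:ℝ)^(m-k) * 4^k = 4^m := by rw [← pow_add, Nat.sub_add_cancel hk]
  have hsgn : ((-4:ℝ))^(m-k) = (-1)^m * (-1)^k * 4^(m-k) := by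
    have h1 : ((-1:ℝ))^(m-k) * (-1)^k = (-1)^m := by rw [← pow_add, Nat.sub_add_cancel hk]
    have h2 : ((-1:ℝ))^k * (-1)^k = 1 := by rw [← mul_pow]; norm_num
    have h0 : ((-4:ℝ))^(m-k) = (-1)^(m-k) * 4^(m-k) := by
      rw [show (-4:ℝ) = (-1)*4 by norm_num, mul_pow]
    have h3 : ((-1:ℝ))^(m-k) = (-1)^m * (-1)^k := by
      rw [← h1, mul_assoc, h2, mul_one]
    rw [h0, h3]
  rw [hsgn]
  linear_combination
    (((-1:ℝ)^m * (-1)^k * (m.choose k : ℝ) * (1/2) * Real.Gamma ((d:ℝ)/2 - 1 + (n:ℝ) + 1)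
        * (α/2) ^ (-((d:ℝ)/2 - 1 + (n:ℝ) + 1)) * 4^m) * hmerge)
    + (((-1:ℝ)^m * (-1)^k * (m.choose k : ℝ) * (1/2) * Real.Gamma ((d:ℝ)/2 - 1 + (n:ℝ) + 1)
        * (α/2) ^ (-((d:ℝ)/2 - 1 + (n:ℝ) + 1)) * 4^(m-k)
        * (∏ j ∈ Finset.range (m-k), ((d:ℝ)/2 - 1 + (k:ℝ) + j + 1))
        * (∏ j ∈ Finset.range k, ((d:ℝ)/2 - 1 + (n:ℝ) + j + 1))) * h4k)
    + (((-1:ℝ)^m * (-1)^k * (m.choose k : ℝ) * (1/2) * Real.Gamma ((d:ℝ)/2 - 1 + (n:ℝ) + 1)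
        * (α/2) ^ (-((d:ℝ)/2 - 1 + (n:ℝ) + 1))
        * (∏ j ∈ Finset.range (m-k), ((d:ℝ)/2 - 1 + (k:ℝ) + j + 1))
        * (∏ j ∈ Finset.range k, ((d:ℝ)/2 - 1 + (n:ℝ) + j + 1))) * h4m)

/-- Orthogonality of the monomial `y^{2n}` to the eigenfunctions `φ_{2m}(y) = H_m(2αy²)`
with `m ≥ n+1`, with respect to the Gaussian weight `y^{d-1} e^{-αy²/2}` on `(0,∞)`. -/
theorem monomial_orthogonal_to_higher_eigenfunctions
    (d : ℕ) (hd : 3 ≤ d) (α : ℝ) (hα : 0 < α)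
    (A : ℕ → ℕ → ℝ)
    (hAm : ∀ m : ℕ, A m m = 1)
    (hArec : ∀ m k : ℕ, 1 ≤ k → k ≤ m →
      A m (k - 1) = -(2 * (k : ℝ) * (2 * (k : ℝ) + (d : ℝ) - 2) / ((m : ℝ) - (k : ℝ) + 1)) * A m k)
    (φ : ℕ → ℝ → ℝ)
    (hφ : ∀ m : ℕ, ∀ y : ℝ,
      φ m y = ∑ k ∈ Finset.range (m + 1), A m k * (2 * α * y ^ 2) ^ k) :
    ∀ n m : ℕ, n + 1 ≤ m →
      ∫ y in Set.Ioi (0 : ℝ),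
        y ^ (2 * n) * φ m y * y ^ (d - 1) * Real.exp (-α * y ^ 2 / 2) = 0 := by
  intro n m hnm
  have hb' : (0:ℝ) < α/2 := by linarith
  have hn : n ≤ m := by omega
  have hint : ∀ y ∈ Set.Ioi (0:ℝ),
      y ^ (2*n) * φ m y * y ^ (d-1) * Real.exp (-α * y^2/2)
      = ∑ k ∈ Finset.range (m+1),
          (A m k * (2*α)^k) * (y ^ (2*(n+k)+(d-1)) * Real.exp (-(α/2) * y^2)) := by
    intro y _
    rw [hφ m y, show -α * y^2/2 = -(α/2) * y^2 by ring,
      Finset.mul_sum, Finset.sum_mul, Finset.sum_mul]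
    refine Finset.sum_congr rfl fun k _ => ?_
    rw [mul_pow, ← pow_mul,
      show 2*(n+k)+(d-1) = 2*n + (2*k + (d-1)) by ring, pow_add, pow_add]
    ring
  calc ∫ y in Set.Ioi (0:ℝ), y ^ (2*n) * φ m y * y ^ (d-1) * Real.exp (-α * y^2/2)
      = ∫ y in Set.Ioi (0:ℝ), ∑ k ∈ Finset.range (m+1),
          (A m k * (2*α)^k) * (y ^ (2*(n+k)+(d-1)) * Real.exp (-(α/2) * y^2)) :=
        setIntegral_congr_fun measurableSet_Ioi hint
    _ = ∑ k ∈ Finset.range (m+1), ∫ y in Set.Ioi (0:ℝ),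
          (A m k * (2*α)^k) * (y ^ (2*(n+k)+(d-1)) * Real.exp (-(α/2) * y^2)) := by
        refine integral_finset_sum _ fun k _ => ?_
        exact (Jint hb' (2*(n+k)+(d-1))).const_mul _
    _ = ∑ k ∈ Finset.range (m+1),
          (A m k * (2*α)^k) * ((α/2) ^ (-(((2*(n+k)+(d-1) : ℕ) : ℝ)+1)/2) * (1/2) *
            Real.Gamma ((((2*(n+k)+(d-1) : ℕ) : ℝ)+1)/2)) := by
        refine Finset.sum_congr rfl fun k _ => ?_
        rw [MeasureTheory.integral_const_mul, Jval hb' (2*(n+k)+(d-1))]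
    _ = ((1/2) * Real.Gamma ((d:ℝ)/2 - 1 + (n:ℝ) + 1) * (α/2) ^ (-((d:ℝ)/2 - 1 + (n:ℝ) + 1)) * 4^m
          * (-1:ℝ)^m * ∏ j ∈ Finset.range (m-n), ((d:ℝ)/2 - 1 + (n:ℝ) + j + 1))
        * ∑ k ∈ Finset.range (m+1),
            (-1:ℝ)^k * (m.choose k) * ∏ j ∈ Finset.range n, ((d:ℝ)/2 - 1 + (k:ℝ) + j + 1) := by
        rw [Finset.mul_sum]
        refine Finset.sum_congr rfl fun k hk => ?_
        exact term_eval d n m k hd α hα (Finset.mem_range_succ_iff.mp hk) hn A hAm hArec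
    _ = 0 := by
        rw [alt_sum_aux n m (by omega) ((d:ℝ)/2 - 1), mul_zero]
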